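/- Let X be a real Banach space and κ an uncountable regular cardinal. Assume that the Lindelöf number of X in its weak topology is less than κ, i.e. every cover of X by weakly open sets has a subcover of cardinality less than κ. Then every strongly dispersed sequence {x_α}_{α<κ} in X is weakly null. -/

import Mathlib

open Cardinal Ordinal Set Pointwise

universe u

noncomputable def closedSpan {X : Type u} [SeminormedAddCommGroup X] [NormedSpace ℝ X]
    (s : Set X) : Submodule ℝ X :=
  (Submodule.span ℝ s).topologicalClosure

def IsDispersed {X : Type u} [SeminormedAddCommGroup X] [NormedSpace ℝ X]
    (x : Ordinal.{u} → X) (lam : Ordinal.{u}) : Prop :=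
  ∀ β < lam,
    (⋂ γ ∈ Set.Iio lam, (closedSpan (x '' {α | γ < α ∧ α < lam}) : Set X)) ⊂
      (closedSpan (x '' {α | β < α ∧ α < lam}) : Set X)

def IsStronglyDispersed {X : Type u} [SeminormedAddCommGroup X] [NormedSpace ℝ X]
    (x : Ordinal.{u} → X) (lam : Ordinal.{u}) : Prop :=
  IsDispersed x lam ∧
    (⋂ β ∈ Set.Iio lam, (closedSpan (x '' {α | β < α ∧ α < lam}) : Set X)) = {0}

def IsWeaklyNull {X : Type u} [SeminormedAddCommGroup X] [NormedSpace ℝ X]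
    (x : Ordinal.{u} → X) (θ : Ordinal.{u}) : Prop :=
  ∀ f : X →L[ℝ] ℝ, ∀ ε > (0:ℝ), ∃ β < θ, ∀ α, β < α → α < θ → |f (x α)| < ε

/-- The Lindelöf number of `X` in its weak topology is `< κ`:
every cover of `X` by weakly open sets has a subcover of cardinality `< κ`. -/
def WeakLindelofNumLT (X : Type u) [NormedAddCommGroup X] [NormedSpace ℝ X]
    (κ : Cardinal.{u}) : Prop :=
  ∀ 𝒰 : Set (Set (WeakSpace ℝ X)), (∀ U ∈ 𝒰, IsOpen U) → ⋃₀ 𝒰 = Set.univ →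
    ∃ 𝒱 ⊆ 𝒰, #𝒱 < κ ∧ ⋃₀ 𝒱 = Set.univ

private lemma aux_eval_cont {X : Type u} [NormedAddCommGroup X] [NormedSpace ℝ X]
    (g : X →L[ℝ] ℝ) : Continuous fun z : WeakSpace ℝ X => g z :=
  WeakBilin.eval_continuous ((topDualPairing ℝ X).flip) g

private lemma aux_isOpen_compl {X : Type u} [NormedAddCommGroup X] [NormedSpace ℝ X]
    (p : Submodule ℝ X) (hp : IsClosed (p : Set X)) :
    @IsOpen (WeakSpace ℝ X) _ ((p : Set X)ᶜ) := by
  rw [isOpen_iff_forall_mem_open]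
  intro y hy
  obtain ⟨g, u, hgu, hyu⟩ := geometric_hahn_banach_closed_point p.convex hp hy
  exact ⟨{z : WeakSpace ℝ X | u < g z},
    fun z hz hzY => lt_asymm hz (hgu z hzY),
    isOpen_lt continuous_const (aux_eval_cont g), hyu⟩

theorem stmt7 {X : Type u} [NormedAddCommGroup X] [NormedSpace ℝ X] [CompleteSpace X]
    (κ : Cardinal.{u}) (hreg : κ.IsRegular) (hunc : ℵ₀ < κ)
    (hLind : WeakLindelofNumLT X κ)
    (x : Ordinal.{u} → X) (hsd : IsStronglyDispersed x κ.ord) :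
    IsWeaklyNull x κ.ord := by
  obtain ⟨-, hinter⟩ := hsd
  intro f ε hε
  classical
  -- tail subspaces, viewed in the weak space
  set Y : Ordinal.{u} → Set (WeakSpace ℝ X) :=
    fun β => ((closedSpan (x '' {α | β < α ∧ α < κ.ord}) : Set X) : Set (WeakSpace ℝ X))
    with hY
  have hYclosed : ∀ β, IsClosed (closedSpan (x '' {α | β < α ∧ α < κ.ord}) : Set X) :=
    fun β => (Submodule.span ℝ _).isClosed_topologicalClosure
  have hUopen : ∀ β, IsOpen ((Y β)ᶜ) := fun β => aux_isOpen_compl _ (hYclosed β)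
  -- the weakly open set where |f| < ε
  set V : Set (WeakSpace ℝ X) := {z | |f z| < ε} with hV
  have hVopen : IsOpen V := isOpen_lt (aux_eval_cont f).abs continuous_const
  set 𝒰 : Set (Set (WeakSpace ℝ X)) := insert V ((fun β => (Y β)ᶜ) '' Set.Iio κ.ord) with h𝒰
  have hopen : ∀ U ∈ 𝒰, IsOpen U := by
    rintro U (rfl | ⟨β, -, rfl⟩)
    · exact hVopen
    · exact hUopen β
  have hcover : ⋃₀ 𝒰 = Set.univ := by
    apply Set.eq_univ_of_forall
    intro z
    by_cases hz : ∀ β < κ.ord, z ∈ Y β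
    · have hz0 : (z : X) ∈ (⋂ β ∈ Set.Iio κ.ord,
          (closedSpan (x '' {α | β < α ∧ α < κ.ord}) : Set X)) := by
        refine Set.mem_iInter₂.2 ?_
        exact fun β hβ => hz β hβ
      rw [hinter] at hz0
      refine ⟨V, Set.mem_insert _ _, ?_⟩
      have hz0' : (z : X) = 0 := hz0
      show |f (z : X)| < ε
      rw [hz0']
      show |f (0 : X)| < ε
      simpa using hε
    · push_neg at hz
      obtain ⟨β, hβ, hzβ⟩ := hz
      exact ⟨(Y β)ᶜ, Set.mem_insert_of_mem _ ⟨β, hβ, rfl⟩, hzβ⟩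
  obtain ⟨𝒱, h𝒱sub, h𝒱card, h𝒱cover⟩ := hLind 𝒰 hopen hcover
  -- choose an index for each member of 𝒱 that is not V
  have hchoice : ∀ W : Set (WeakSpace ℝ X), W ∈ 𝒱 → W ≠ V →
      ∃ β, β < κ.ord ∧ W = (Y β)ᶜ := by
    intro W hW hWV
    rcases h𝒱sub hW with rfl | ⟨β, hβ, rfl⟩
    · exact absurd rfl hWV
    · exact ⟨β, hβ, rfl⟩
  set g : ↥𝒱 → Ordinal.{u} := fun W =>
    if h : ∃ β, β < κ.ord ∧ (W : Set (WeakSpace ℝ X)) = (Y β)ᶜ then h.choose else 0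
    with hg
  have hκpos : (0 : Ordinal.{u}) < κ.ord := by
    rw [← Cardinal.ord_zero]
    exact Cardinal.ord_lt_ord.2 hreg.pos
  have hglt : ∀ W : ↥𝒱, g W < κ.ord := by
    intro W
    by_cases h : ∃ β, β < κ.ord ∧ (W : Set (WeakSpace ℝ X)) = (Y β)ᶜ
    · have : g W = h.choose := dif_pos h
      rw [this]
      exact h.choose_spec.1
    · have : g W = 0 := dif_neg h
      rw [this]
      exact hκpos
  have hbound : (⨆ W : ↥𝒱, g W) < κ.ord := by
    apply Ordinal.iSup_lt_ord _ hglt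
    rw [hreg.cof_eq]
    exact h𝒱card
  refine ⟨⨆ W : ↥𝒱, g W, hbound, ?_⟩
  intro α hβ₀α hακ
  -- x α lies in every tail Y (g W)
  have hxtail : ∀ W : ↥𝒱, (x α : WeakSpace ℝ X) ∈ Y (g W) := by
    intro W
    have hle : g W ≤ ⨆ W : ↥𝒱, g W := Ordinal.le_iSup _ W
    have hmem : x α ∈ x '' {α' | g W < α' ∧ α' < κ.ord} :=
      ⟨α, ⟨lt_of_le_of_lt hle hβ₀α, hακ⟩, rfl⟩
    show x α ∈ (closedSpan (x '' {α' | g W < α' ∧ α' < κ.ord}) : Set X)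
    exact (Submodule.span ℝ _).le_topologicalClosure (Submodule.subset_span hmem)
  -- x α is covered by 𝒱, but cannot be in any (Y β)ᶜ from 𝒱, so it is in V
  have hxcov : (x α : WeakSpace ℝ X) ∈ ⋃₀ 𝒱 := h𝒱cover ▸ Set.mem_univ _
  obtain ⟨W, hW𝒱, hxW⟩ := hxcov
  by_cases hWV : W = V
  · rw [hWV] at hxW
    exact hxW
  · exfalso
    obtain ⟨β, hβκ, hWβ⟩ := hchoice W hW𝒱 hWV
    have h : ∃ β, β < κ.ord ∧ (W : Set (WeakSpace ℝ X)) = (Y β)ᶜ := ⟨β, hβκ, hWβ⟩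
    have hgW : g ⟨W, hW𝒱⟩ = h.choose := dif_pos h
    have hmem := hxtail ⟨W, hW𝒱⟩
    rw [hgW] at hmem
    rw [h.choose_spec.2] at hxW
    exact hxW hmem
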